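/- Let f : ℝ^d → ℝ be differentiable and suppose that for every block ℓ ∈ {1,…,p} and all x₁, x₂ ∈ ℝ^d: f(x₂) ≥ f(x₁) + ⟨∇f(x₁), x₂ − x₁⟩ + (1/(2L_ℓ))‖∇^{(ℓ)} f(x₁) − ∇^{(ℓ)} f(x₂)‖². Then f belongs to F^coord_{0,L}(ℝ^d); that is, f is convex and for every ℓ, every x ∈ ℝ^d and every h ∈ ℝ^{d_ℓ}: ‖∇^{(ℓ)} f(x + U_ℓ h) − ∇^{(ℓ)} f(x)‖ ≤ L_ℓ ‖h‖. -/

import Mathlib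

open RealInnerProductSpace

noncomputable section

/-- The `ℓ`-th block `ℝ^{d_ℓ}` of the decomposition `ℝ^d = ℝ^{d_1} × … × ℝ^{d_p}`. -/
abbrev Blk {p : ℕ} (d : Fin p → ℕ) (ℓ : Fin p) : Type := EuclideanSpace ℝ (Fin (d ℓ))

/-- The space `ℝ^d = ℝ^{d_1} × … × ℝ^{d_p}` with the Euclidean (ℓ²) norm. -/
abbrev Sp {p : ℕ} (d : Fin p → ℕ) : Type := PiLp 2 (Blk d)

/-- The selection embedding `U_ℓ : ℝ^{d_ℓ} → ℝ^d` placing `h` in block `ℓ` and `0` elsewhere. -/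
def inj {p : ℕ} (d : Fin p → ℕ) (ℓ : Fin p) (h : Blk d ℓ) : Sp d :=
  (WithLp.equiv 2 (∀ ℓ, Blk d ℓ)).symm (Pi.single ℓ h)

/-- Membership in the class `F^coord_{0,L}(ℝ^d)`: convex, differentiable, and for each block
`ℓ` the partial gradient `∇^{(ℓ)} f` is `L_ℓ`-Lipschitz along the block `ℓ`. -/
def IsCoordSmooth {p : ℕ} (d : Fin p → ℕ) (L : Fin p → ℝ) (f : Sp d → ℝ) : Prop :=
  ConvexOn ℝ Set.univ f ∧ Differentiable ℝ f ∧
    ∀ (ℓ : Fin p) (x : Sp d) (h : Blk d ℓ),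
      ‖gradient f (x + inj d ℓ h) ℓ - gradient f x ℓ‖ ≤ L ℓ * ‖h‖

theorem mem_coordSmooth_of_lower_bound {p : ℕ} {d : Fin p → ℕ}
    (L : Fin p → ℝ) (hL : ∀ ℓ, 0 < L ℓ) (f : Sp d → ℝ) (hdiff : Differentiable ℝ f)
    (hlower : ∀ (ℓ : Fin p) (x₁ x₂ : Sp d),
      f x₂ ≥ f x₁ + ⟪gradient f x₁, x₂ - x₁⟫
        + 1 / (2 * L ℓ) * ‖gradient f x₁ ℓ - gradient f x₂ ℓ‖ ^ 2) :
    IsCoordSmooth d L f := by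
  have key : ∀ (v : Sp d) (ℓ : Fin p) (h : Blk d ℓ), ⟪v, inj d ℓ h⟫ = ⟪v ℓ, h⟫ := by
    intro v ℓ h
    rw [PiLp.inner_apply, Finset.sum_eq_single ℓ]
    · simp [inj]
    · intro j _ hj
      simp [inj, Pi.single_eq_of_ne hj]
    · simp
  have sub : ∀ x₁ x₂ : Sp d, f x₂ ≥ f x₁ + ⟪gradient f x₁, x₂ - x₁⟫ := by
    rcases Nat.eq_zero_or_pos p with hp | hp
    · subst hp
      intro x₁ x₂
      have hxy : x₁ = x₂ := PiLp.ext fun i => Fin.elim0 i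
      subst hxy
      simp
    · intro x₁ x₂
      have h1 := hlower ⟨0, hp⟩ x₁ x₂
      have hnn : 0 ≤ 1 / (2 * L ⟨0, hp⟩) *
          ‖gradient f x₁ ⟨0, hp⟩ - gradient f x₂ ⟨0, hp⟩‖ ^ 2 := by
        have := hL ⟨0, hp⟩
        positivity
      linarith
  refine ⟨⟨convex_univ, fun x _ y _ a b ha hb hab => ?_⟩, hdiff, ?_⟩
  · set z := a • x + b • y with hz
    have h1 := sub z x
    have h2 := sub z y
    have hc : a • (x - z) + b • (y - z) = 0 := by
      have h' : a • (x - z) + b • (y - z) = (a • x + b • y) - (a + b) • z := by module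
      rw [h', hab, one_smul, ← hz, sub_self]
    have hzero : a * ⟪gradient f z, x - z⟫ + b * ⟪gradient f z, y - z⟫ = 0 := by
      rw [← real_inner_smul_right, ← real_inner_smul_right, ← inner_add_right, hc,
        inner_zero_right]
    have hmul1 : a * (f z + ⟪gradient f z, x - z⟫) ≤ a * f x :=
      mul_le_mul_of_nonneg_left h1 ha
    have hmul2 : b * (f z + ⟪gradient f z, y - z⟫) ≤ b * f y :=
      mul_le_mul_of_nonneg_left h2 hb
    simp only [smul_eq_mul]
    have hfz : f z = a * f z + b * f z := by rw [← add_mul, hab, one_mul]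
    linarith
  · intro ℓ x h
    set x₂ := x + inj d ℓ h with hx₂
    have h1 := hlower ℓ x x₂
    have h2 := hlower ℓ x₂ x
    set Δ := gradient f x₂ ℓ - gradient f x ℓ with hΔ
    have hns : ‖gradient f x ℓ - gradient f x₂ ℓ‖ = ‖Δ‖ := norm_sub_rev _ _
    have hns2 : ‖gradient f x₂ ℓ - gradient f x ℓ‖ = ‖Δ‖ := rfl
    have hd : x₂ - x = inj d ℓ h := by rw [hx₂]; abel
    have hd2 : x - x₂ = -(inj d ℓ h) := by rw [hx₂]; abel
    have e1 : ⟪gradient f x, x₂ - x⟫ = ⟪gradient f x ℓ, h⟫ := by rw [hd, key]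
    have e2 : ⟪gradient f x₂, x - x₂⟫ = -⟪gradient f x₂ ℓ, h⟫ := by
      rw [hd2, inner_neg_right, key]
    have hinner : (1 / L ℓ) * ‖Δ‖ ^ 2 ≤ ⟪Δ, h⟫ := by
      have hL' := hL ℓ
      rw [hΔ, inner_sub_left]
      rw [hns, e1] at h1
      rw [hns2, e2] at h2
      have h2L : 1 / (2 * L ℓ) > 0 := by positivity
      have : (1 / L ℓ) = 2 * (1 / (2 * L ℓ)) := by field_simp
      rw [this]
      linarith
    have hle : ‖Δ‖ ^ 2 ≤ L ℓ * ‖Δ‖ * ‖h‖ := by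
      have hib := real_inner_le_norm Δ h
      have hL' := hL ℓ
      have := hinner.trans hib
      calc ‖Δ‖ ^ 2 = L ℓ * ((1 / L ℓ) * ‖Δ‖ ^ 2) := by field_simp
        _ ≤ L ℓ * (‖Δ‖ * ‖h‖) := by
            apply mul_le_mul_of_nonneg_left this hL'.le
        _ = L ℓ * ‖Δ‖ * ‖h‖ := by ring
    rcases eq_or_lt_of_le (norm_nonneg Δ) with hΔ0 | hΔ0
    · rw [← hΔ0]
      have := hL ℓ
      positivity
    · have : ‖Δ‖ * ‖Δ‖ ≤ (L ℓ * ‖h‖) * ‖Δ‖ := by nlinarith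
      exact le_of_mul_le_mul_right this hΔ0
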